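/- Let π be a uniformly random permutation of a finite set U, let A, B ⊆ U be nonempty with |A ∪ B| ≥ h ≥ 1, and let s(X) denote the h smallest elements of π(X). Then the expected value of |s(A∪B) ∩ s(A) ∩ s(B)| / h equals |A ∩ B| / |A ∪ B|; equivalently, 1 − |s(A∪B) ∩ s(A) ∩ s(B)|/|s(A∪B)| is an unbiased estimator of the Jaccard distance 1 − |A∩B|/|A∪B|. -/

import Mathlib

/-- The bottom-`h` sketch of a finite set `X` in a linear order: the set of the
`min(h, |X|)` smallest elements of `X`. -/
def sketch {α : Type*} [LinearOrder α] (h : ℕ) (X : Finset α) : Finset α :=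
  X.filter fun a => (X.filter fun b => b < a).card < h

lemma mem_sketch {α : Type*} [LinearOrder α] {h : ℕ} {X : Finset α} {a : α} :
    a ∈ sketch h X ↔ a ∈ X ∧ (X.filter fun b => b < a).card < h := by
  simp [sketch]

lemma sketch_mono_mem {α : Type*} [LinearOrder α] {h : ℕ} {X Y : Finset α} {a : α}
    (hYX : Y ⊆ X) (haY : a ∈ Y) (haX : a ∈ sketch h X) : a ∈ sketch h Y := by
  rw [mem_sketch] at haX ⊢
  exact ⟨haY, lt_of_le_of_lt (Finset.card_le_card
    (Finset.filter_subset_filter _ hYX)) haX.2⟩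

lemma sketch_card {α : Type*} [LinearOrder α] {h : ℕ} {X : Finset α} (hX : h ≤ X.card) :
    (sketch h X).card = h := by
  set r : α → ℕ := fun a => (X.filter fun b => b < a).card with hr
  have hmono : ∀ a ∈ X, ∀ b, a < b → r a < r b := by
    intro a ha b hab
    apply Finset.card_lt_card
    refine ⟨X.monotone_filter_right (fun c _ hc => lt_trans hc hab), fun hsub => ?_⟩
    have := hsub (Finset.mem_filter.2 ⟨ha, hab⟩)
    simp at this
  have hinj : Set.InjOn r X := by
    intro a ha b hb hab
    by_contra hne
    rcases lt_or_gt_of_ne hne with hlt | hlt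
    · exact absurd hab (ne_of_lt (hmono a ha b hlt))
    · exact absurd hab.symm (ne_of_lt (hmono b hb a hlt))
  have hlt : ∀ a ∈ X, r a < X.card := by
    intro a ha
    apply Finset.card_lt_card
    refine ⟨Finset.filter_subset _ _, fun hsub => ?_⟩
    have := hsub ha
    simp at this
  have himg : X.image r = Finset.range X.card := by
    apply Finset.eq_of_subset_of_card_le
    · intro n hn
      obtain ⟨a, ha, rfl⟩ := Finset.mem_image.1 hn
      exact Finset.mem_range.2 (hlt a ha)
    · rw [Finset.card_range, Finset.card_image_of_injOn hinj]
  have hsk : sketch h X = X.filter fun a => r a < h := rfl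
  have himg2 : (sketch h X).image r = (X.image r).filter fun n => n < h := by
    rw [hsk, Finset.filter_image]
  have hsub : Set.InjOn r (sketch h X) :=
    hinj.mono (fun a ha => Finset.mem_coe.2 (Finset.filter_subset _ _ (Finset.mem_coe.1 ha)))
  have hcim : ((sketch h X).image r).card = (sketch h X).card :=
    Finset.card_image_of_injOn hsub
  have hrange : (Finset.range X.card).filter (fun n => n < h) = Finset.range h := by
    ext n; simp; omega
  rw [← hcim, himg2, himg, hrange, Finset.card_range]

/-- Unbiasedness of the min-hash Jaccard estimator (Broder 1997): averaging over
all permutations `π` of the ground set `U`, the expected value of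
`|s(π(A∪B)) ∩ s(π(A)) ∩ s(π(B))| / h` equals `|A∩B| / |A∪B|`. -/
theorem minhash_unbiased {U : Type*} [Fintype U] [LinearOrder U]
    (h : ℕ) (hh : 1 ≤ h) (A B : Finset U) (hA : A.Nonempty) (hB : B.Nonempty)
    (hcard : h ≤ (A ∪ B).card) :
    (∑ π : Equiv.Perm U,
        (((sketch h ((A ∪ B).image π) ∩ sketch h (A.image π) ∩
            sketch h (B.image π)).card : ℚ) / h)) /
      (Fintype.card (Equiv.Perm U) : ℚ) =
    ((A ∩ B).card : ℚ) / ((A ∪ B).card : ℚ) := by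
  classical
  set S : Equiv.Perm U → Finset U := fun π => sketch h ((A ∪ B).image π) with hS
  -- Step 0: image of union under swap
  have hswap : ∀ x ∈ A ∪ B, ∀ y ∈ A ∪ B,
      (A ∪ B).image (Equiv.swap x y) = A ∪ B := by
    intro x hx y hy
    apply Finset.eq_of_subset_of_card_le
    · intro z hz
      obtain ⟨w, hw, rfl⟩ := Finset.mem_image.1 hz
      by_cases hwx : w = x
      · subst hwx; rwa [Equiv.swap_apply_left]
      by_cases hwy : w = y
      · subst hwy; rwa [Equiv.swap_apply_right]
      · rwa [Equiv.swap_apply_of_ne_of_ne hwx hwy]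
    · rw [Finset.card_image_of_injective _ (Equiv.injective _)]
  -- Step 1: the triple intersection
  have htriple : ∀ π : Equiv.Perm U,
      (sketch h ((A ∪ B).image π) ∩ sketch h (A.image π) ∩
        sketch h (B.image π)).card
      = ((A ∩ B).filter fun x => π x ∈ S π).card := by
    intro π
    have hAsub : A.image π ⊆ (A ∪ B).image π :=
      Finset.image_subset_image Finset.subset_union_left
    have hBsub : B.image π ⊆ (A ∪ B).image π :=
      Finset.image_subset_image Finset.subset_union_right
    have heq : sketch h ((A ∪ B).image π) ∩ sketch h (A.image π) ∩
        sketch h (B.image π) = ((A ∩ B).image π).filter (fun x => x ∈ S π) := by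
      ext x
      simp only [Finset.mem_inter, Finset.mem_filter, Finset.mem_image,
        Finset.mem_inter] at *
      constructor
      · rintro ⟨⟨hxS, hxA⟩, hxB⟩
        have hA' := (mem_sketch.1 hxA).1
        have hB' := (mem_sketch.1 hxB).1
        obtain ⟨a, ha, rfl⟩ := Finset.mem_image.1 hA'
        obtain ⟨b, hb, hba⟩ := Finset.mem_image.1 hB'
        have hba' : b = a := π.injective hba
        exact ⟨⟨a, ⟨ha, hba' ▸ hb⟩, rfl⟩, hxS⟩
      · rintro ⟨⟨a, ⟨ha, hb⟩, rfl⟩, hxS⟩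
        refine ⟨⟨hxS, ?_⟩, ?_⟩
        · exact sketch_mono_mem hAsub (Finset.mem_image_of_mem _ ha) hxS
        · exact sketch_mono_mem hBsub (Finset.mem_image_of_mem _ hb) hxS
    rw [heq, Finset.filter_image, Finset.card_image_of_injective _ π.injective]
  -- Step 4: per-π row sum over A ∪ B equals h
  have hrow : ∀ π : Equiv.Perm U,
      ((A ∪ B).filter fun x => π x ∈ S π).card = h := by
    intro π
    have hSsub : S π ⊆ (A ∪ B).image π := Finset.filter_subset _ _
    have : (((A ∪ B).image π).filter fun x => x ∈ S π) = S π := by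
      rw [Finset.filter_mem_eq_inter, Finset.inter_eq_right.2 hSsub]
    calc ((A ∪ B).filter fun x => π x ∈ S π).card
        = ((((A ∪ B).image π).filter fun x => x ∈ S π)).card := by
          rw [Finset.filter_image, Finset.card_image_of_injective _ π.injective]
      _ = (S π).card := by rw [this]
      _ = h := sketch_card (by
          rwa [Finset.card_image_of_injective _ π.injective])
  -- counts
  set N : U → ℕ := fun x => ∑ π : Equiv.Perm U,
      (if π x ∈ S π then 1 else 0) with hN
  -- Step 3: N is constant on A ∪ B
  have hconst : ∀ x ∈ A ∪ B, ∀ y ∈ A ∪ B, N x = N y := by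
    intro x hx y hy
    rw [hN]
    refine Fintype.sum_equiv (Equiv.mulRight (Equiv.swap x y)) _ _ (fun π => ?_)
    have h1 : (π * Equiv.swap x y) y = π x := by
      simp [Equiv.Perm.mul_apply]
    have h2 : S (π * Equiv.swap x y) = S π := by
      rw [hS]
      simp only [Equiv.Perm.coe_mul]
      rw [← Finset.image_image, hswap x hx y hy]
    simp only [Equiv.coe_mulRight, h1, h2]
  -- Step 5: total sum over A ∪ B
  have htot : ∑ x ∈ A ∪ B, N x = h * Fintype.card (Equiv.Perm U) := by
    rw [hN, Finset.sum_comm]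
    have : ∀ π : Equiv.Perm U,
        (∑ x ∈ A ∪ B, if π x ∈ S π then 1 else 0) = h := by
      intro π
      rw [← Finset.card_filter]
      exact hrow π
    rw [Finset.sum_congr rfl (fun π _ => this π), Finset.sum_const,
      Finset.card_univ, smul_eq_mul, mul_comm]
  obtain ⟨x0, hx0⟩ := hA
  have hx0' : x0 ∈ A ∪ B := Finset.mem_union_left _ hx0
  have hconst' : ∑ x ∈ A ∪ B, N x = (A ∪ B).card * N x0 := by
    rw [Finset.sum_congr rfl (fun x hx => hconst x hx x0 hx0'),
      Finset.sum_const, smul_eq_mul]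
  have hkey : (A ∪ B).card * N x0 = h * Fintype.card (Equiv.Perm U) := by
    rw [← hconst', htot]
  -- Step 2: numerator
  have hnum : (∑ π : Equiv.Perm U,
      ((sketch h ((A ∪ B).image π) ∩ sketch h (A.image π) ∩
        sketch h (B.image π)).card)) = (A ∩ B).card * N x0 := by
    calc (∑ π : Equiv.Perm U,
        ((sketch h ((A ∪ B).image π) ∩ sketch h (A.image π) ∩
          sketch h (B.image π)).card))
        = ∑ π : Equiv.Perm U, ((A ∩ B).filter fun x => π x ∈ S π).card := by
          exact Finset.sum_congr rfl (fun π _ => htriple π)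
      _ = ∑ π : Equiv.Perm U, ∑ x ∈ A ∩ B, if π x ∈ S π then 1 else 0 := by
          exact Finset.sum_congr rfl (fun π _ => (Finset.card_filter _ _))
      _ = ∑ x ∈ A ∩ B, N x := by rw [Finset.sum_comm]
      _ = (A ∩ B).card * N x0 := by
          rw [Finset.sum_congr rfl (fun x hx => hconst x
            (Finset.mem_union_left _ (Finset.mem_inter.1 hx).1) x0 hx0'),
            Finset.sum_const, smul_eq_mul]
  -- arithmetic
  have hP : (0:ℚ) < (Fintype.card (Equiv.Perm U) : ℚ) := by
    exact_mod_cast Fintype.card_pos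
  have hhne : (h:ℚ) ≠ 0 := by positivity
  have hn : (0:ℚ) < ((A ∪ B).card : ℚ) := by
    have : 0 < (A ∪ B).card := lt_of_lt_of_le hh hcard
    exact_mod_cast this
  have hnum' : (∑ π : Equiv.Perm U,
      (((sketch h ((A ∪ B).image π) ∩ sketch h (A.image π) ∩
        sketch h (B.image π)).card : ℚ) / h))
      = ((A ∩ B).card : ℚ) * (N x0 : ℚ) / h := by
    rw [← Finset.sum_div]
    congr 1
    exact_mod_cast hnum
  rw [hnum']
  have hkeyQ : ((A ∪ B).card : ℚ) * (N x0 : ℚ)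
      = (h : ℚ) * (Fintype.card (Equiv.Perm U) : ℚ) := by exact_mod_cast hkey
  field_simp
  linear_combination ((A ∩ B).card : ℚ) * hkeyQ
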